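/- Let R be a ring and M a right R-module, W = End_R(M). (1) If M is a progenerator, then for every anti-endomorphism α of W the form b_α is right regular and its corresponding anti-endomorphism is α; every right regular general bilinear form b on M is similar to b_{α(b)}; and two right regular general bilinear forms on M are similar if and only if they have the same corresponding anti-endomorphism. Consequently b ↦ α(b) induces a bijection between similarity classes of right regular general bilinear forms on M and the set of anti-endomorphisms of W. (2) If M is a generator, then for every anti-automorphism α of W the form b_α is both right and left regular with corresponding anti-endomorphism α; the corresponding anti-endomorphism of every right and left regular form on M is an anti-automorphism of W, and every such form is similar to b_{α(b)}. Consequently b ↦ α(b) induces a bijection between similarity classes of regular (i.e., right and left regular) general bilinear forms on M and the set of anti-automorphisms of W. -/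

import Mathlib

open MulOpposite TensorProduct Function

universe u v w v'

section Core

/-- An anti-endomorphism of a ring: additive, unital, reverses multiplication. -/
def IsAntiEndo {W : Type*} [Ring W] (α : W → W) : Prop :=
  (∀ u v : W, α (u + v) = α u + α v) ∧ α 1 = 1 ∧ ∀ u v : W, α (u * v) = α v * α u

/-- An anti-automorphism of a ring: a bijective anti-endomorphism. -/
def IsAntiAuto {W : Type*} [Ring W] (α : W → W) : Prop :=
  IsAntiEndo α ∧ Function.Bijective α

/-- An inner automorphism of a ring: conjugation by a unit. -/
def IsInnerAut {W : Type*} [Ring W] (φ : W → W) : Prop :=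
  ∃ u : Wˣ, ∀ w : W, φ w = ↑u * w * ↑u⁻¹

variable (R : Type u) [Ring R]

/-- A double `R`-module structure on the additive group `K`: two commuting
right `R`-module structures `m0` and `m1`. -/
structure DoubleModule (K : Type v) [AddCommGroup K] where
  m0 : K → R → K
  m1 : K → R → K
  m0_add_left : ∀ (k k' : K) (r : R), m0 (k + k') r = m0 k r + m0 k' r
  m0_add_right : ∀ (k : K) (r r' : R), m0 k (r + r') = m0 k r + m0 k r'
  m0_mul : ∀ (k : K) (r r' : R), m0 k (r * r') = m0 (m0 k r) r'
  m0_one : ∀ k : K, m0 k 1 = k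
  m1_add_left : ∀ (k k' : K) (r : R), m1 (k + k') r = m1 k r + m1 k' r
  m1_add_right : ∀ (k : K) (r r' : R), m1 k (r + r') = m1 k r + m1 k r'
  m1_mul : ∀ (k : K) (r r' : R), m1 k (r * r') = m1 (m1 k r) r'
  m1_one : ∀ k : K, m1 k 1 = k
  comm : ∀ (k : K) (a b : R), m1 (m0 k a) b = m0 (m1 k b) a

variable {R}

/-- A homomorphism of double `R`-modules. -/
def IsDoubleHom {K : Type v} {K' : Type w} [AddCommGroup K] [AddCommGroup K']
    (DK : DoubleModule R K) (DK' : DoubleModule R K') (f : K → K') : Prop :=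
  (∀ k k' : K, f (k + k') = f k + f k') ∧
  (∀ (k : K) (r : R), f (DK.m0 k r) = DK'.m0 (f k) r) ∧
  (∀ (k : K) (r : R), f (DK.m1 k r) = DK'.m1 (f k) r)

/-- An isomorphism of double `R`-modules. -/
def IsDoubleIso {K : Type v} {K' : Type w} [AddCommGroup K] [AddCommGroup K']
    (DK : DoubleModule R K) (DK' : DoubleModule R K') (f : K → K') : Prop :=
  IsDoubleHom DK DK' f ∧ Function.Bijective f

/-- An anti-automorphism of a double `R`-module: an additive bijection exchanging
the two module structures. -/
def IsDoubleAntiAuto {K : Type v} [AddCommGroup K] (DK : DoubleModule R K) (θ : K → K) : Prop :=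
  Function.Bijective θ ∧ (∀ k k' : K, θ (k + k') = θ k + θ k') ∧
  (∀ (k : K) (r : R), θ (DK.m0 k r) = DK.m1 (θ k) r) ∧
  (∀ (k : K) (r : R), θ (DK.m1 k r) = DK.m0 (θ k) r)

variable (R)

/-- A general bilinear form on a right `R`-module `M` (encoded as a module over `Rᵐᵒᵖ`)
with values in a double `R`-module `(K, DK)`. -/
structure GBF (M : Type v) [AddCommGroup M] [Module Rᵐᵒᵖ M]
    (K : Type w) [AddCommGroup K] (DK : DoubleModule R K) where
  b : M → M → K
  add_left : ∀ x x' y : M, b (x + x') y = b x y + b x' y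
  add_right : ∀ x y y' : M, b x (y + y') = b x y + b x y'
  smul_left : ∀ (x y : M) (r : R), b (op r • x) y = DK.m0 (b x y) r
  smul_right : ∀ (x y : M) (r : R), b x (op r • y) = DK.m1 (b x y) r

variable {R}

namespace GBF

variable {M : Type v} [AddCommGroup M] [Module Rᵐᵒᵖ M]
  {K : Type w} [AddCommGroup K] {DK : DoubleModule R K}

/-- The right adjoint of `β` is injective. -/
def RightInjective (β : GBF R M K DK) : Prop :=
  ∀ x x' : M, (∀ y : M, β.b y x = β.b y x') → x = x'

/-- The right adjoint of `β` is bijective onto `Hom_R(M, K₀)`. -/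
def RightRegular (β : GBF R M K DK) : Prop :=
  β.RightInjective ∧
  ∀ f : M → K, (∀ y y' : M, f (y + y') = f y + f y') →
    (∀ (y : M) (r : R), f (op r • y) = DK.m0 (f y) r) →
    ∃ x : M, ∀ y : M, f y = β.b y x

/-- The left adjoint of `β` is injective. -/
def LeftInjective (β : GBF R M K DK) : Prop :=
  ∀ x x' : M, (∀ y : M, β.b x y = β.b x' y) → x = x'

/-- The left adjoint of `β` is bijective onto `Hom_R(M, K₁)`. -/
def LeftRegular (β : GBF R M K DK) : Prop :=
  β.LeftInjective ∧
  ∀ f : M → K, (∀ y y' : M, f (y + y') = f y + f y') →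
    (∀ (y : M) (r : R), f (op r • y) = DK.m1 (f y) r) →
    ∃ x : M, ∀ y : M, f y = β.b x y

/-- `α` is an adjoint anti-endomorphism for `β`: `β(w x, y) = β(x, α(w) y)`. -/
def IsAdjoint (β : GBF R M K DK) (α : Module.End Rᵐᵒᵖ M → Module.End Rᵐᵒᵖ M) : Prop :=
  ∀ (w : Module.End Rᵐᵒᵖ M) (x y : M), β.b (w x) y = β.b x (α w y)

/-- Similarity of general bilinear forms on the same module. -/
def Similar {K' : Type v'} [AddCommGroup K'] {DK' : DoubleModule R K'}
    (β : GBF R M K DK) (β' : GBF R M K' DK') : Prop :=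
  ∃ f : K → K', IsDoubleIso DK DK' f ∧ ∀ x y : M, β'.b x y = f (β.b x y)

end GBF

section Kalpha

variable {M : Type v} [AddCommGroup M] [Module Rᵐᵒᵖ M]

/-- The subgroup of `M ⊗_ℤ M` generated by the elements `(w x) ⊗ y - x ⊗ (α w y)`. -/
def kalphaRel (α : Module.End Rᵐᵒᵖ M → Module.End Rᵐᵒᵖ M) : Submodule ℤ (M ⊗[ℤ] M) :=
  Submodule.span ℤ
    {z | ∃ (w : Module.End Rᵐᵒᵖ M) (x y : M), z = (w x) ⊗ₜ[ℤ] y - x ⊗ₜ[ℤ] (α w y)}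

/-- `K_α`, the quotient of `M ⊗_ℤ M` by the relations `(w x) ⊗ y = x ⊗ (α w y)`. -/
abbrev Kalpha (α : Module.End Rᵐᵒᵖ M → Module.End Rᵐᵒᵖ M) : Type _ :=
  (M ⊗[ℤ] M) ⧸ kalphaRel α

/-- The map `x ⊗ y ↦ (x·r) ⊗ y` on `M ⊗_ℤ M`. -/
noncomputable def smulLeftMap (r : R) : (M ⊗[ℤ] M) →ₗ[ℤ] (M ⊗[ℤ] M) :=
  TensorProduct.map ((DistribMulAction.toAddMonoidHom M (op r : Rᵐᵒᵖ)).toIntLinearMap)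
    LinearMap.id

/-- The map `x ⊗ y ↦ x ⊗ (y·r)` on `M ⊗_ℤ M`. -/
noncomputable def smulRightMap (r : R) : (M ⊗[ℤ] M) →ₗ[ℤ] (M ⊗[ℤ] M) :=
  TensorProduct.map LinearMap.id
    ((DistribMulAction.toAddMonoidHom M (op r : Rᵐᵒᵖ)).toIntLinearMap)

theorem kalphaRel_le_left (α : Module.End Rᵐᵒᵖ M → Module.End Rᵐᵒᵖ M) (r : R) :
    kalphaRel α ≤ (kalphaRel α).comap (smulLeftMap (M := M) r) := by
  rw [kalphaRel, Submodule.span_le]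
  rintro _ ⟨w, x, y, rfl⟩
  rw [SetLike.mem_coe, Submodule.mem_comap, map_sub]
  have h1 : smulLeftMap (M := M) r ((w x) ⊗ₜ[ℤ] y) = (w (op r • x)) ⊗ₜ[ℤ] y := by
    simp [smulLeftMap, map_smul]; rfl
  have h2 : smulLeftMap (M := M) r (x ⊗ₜ[ℤ] (α w y)) = (op r • x) ⊗ₜ[ℤ] (α w y) := by
    simp [smulLeftMap]; rfl
  rw [h1, h2]
  exact Submodule.subset_span ⟨w, op r • x, y, rfl⟩

theorem kalphaRel_le_right (α : Module.End Rᵐᵒᵖ M → Module.End Rᵐᵒᵖ M) (r : R) :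
    kalphaRel α ≤ (kalphaRel α).comap (smulRightMap (M := M) r) := by
  rw [kalphaRel, Submodule.span_le]
  rintro _ ⟨w, x, y, rfl⟩
  rw [SetLike.mem_coe, Submodule.mem_comap, map_sub]
  have h1 : smulRightMap (M := M) r ((w x) ⊗ₜ[ℤ] y) = (w x) ⊗ₜ[ℤ] (op r • y) := by
    simp [smulRightMap]; rfl
  have h2 : smulRightMap (M := M) r (x ⊗ₜ[ℤ] (α w y)) = x ⊗ₜ[ℤ] (α w (op r • y)) := by
    simp [smulRightMap, map_smul]; rfl
  rw [h1, h2]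
  exact Submodule.subset_span ⟨w, x, op r • y, rfl⟩

/-- The `m0`-action on `K_α`. -/
noncomputable def kSmul0 (α : Module.End Rᵐᵒᵖ M → Module.End Rᵐᵒᵖ M) (r : R) :
    Kalpha α →ₗ[ℤ] Kalpha α :=
  Submodule.mapQ _ _ (smulLeftMap r) (kalphaRel_le_left α r)

/-- The `m1`-action on `K_α`. -/
noncomputable def kSmul1 (α : Module.End Rᵐᵒᵖ M → Module.End Rᵐᵒᵖ M) (r : R) :
    Kalpha α →ₗ[ℤ] Kalpha α :=
  Submodule.mapQ _ _ (smulRightMap r) (kalphaRel_le_right α r)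

theorem kSmul0_mk (α : Module.End Rᵐᵒᵖ M → Module.End Rᵐᵒᵖ M) (r : R) (t : M ⊗[ℤ] M) :
    kSmul0 α r (Submodule.Quotient.mk t) = Submodule.Quotient.mk (smulLeftMap r t) := rfl

theorem kSmul1_mk (α : Module.End Rᵐᵒᵖ M → Module.End Rᵐᵒᵖ M) (r : R) (t : M ⊗[ℤ] M) :
    kSmul1 α r (Submodule.Quotient.mk t) = Submodule.Quotient.mk (smulRightMap r t) := rfl

/-- The double `R`-module structure on `K_α`. -/
noncomputable def KalphaDM (α : Module.End Rᵐᵒᵖ M → Module.End Rᵐᵒᵖ M) :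
    DoubleModule R (Kalpha α) where
  m0 k r := kSmul0 α r k
  m1 k r := kSmul1 α r k
  m0_add_left k k' r := map_add _ k k'
  m0_add_right := by
    intro k r r'
    try dsimp only
    induction k using Submodule.Quotient.induction_on with
    | _ t =>
      rw [kSmul0_mk, kSmul0_mk, kSmul0_mk, ← Submodule.Quotient.mk_add]
      congr 1
      induction t with
      | zero => simp
      | tmul x y =>
        show (op (r + r') • x) ⊗ₜ[ℤ] y = (op r • x) ⊗ₜ[ℤ] y + (op r' • x) ⊗ₜ[ℤ] y
        simp [op_add, add_smul, TensorProduct.add_tmul]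
      | add a b ha hb => rw [map_add, map_add, map_add, ha, hb]; abel
  m0_mul := by
    intro k r r'
    try dsimp only
    induction k using Submodule.Quotient.induction_on with
    | _ t =>
      rw [kSmul0_mk, kSmul0_mk, kSmul0_mk]
      congr 1
      induction t with
      | zero => simp
      | tmul x y =>
        show (op (r * r') • x) ⊗ₜ[ℤ] y = (op r' • op r • x) ⊗ₜ[ℤ] y
        simp [op_mul, mul_smul]
      | add a b ha hb => rw [map_add, map_add, map_add, ha, hb]
  m0_one := by
    intro k
    try dsimp only
    induction k using Submodule.Quotient.induction_on with
    | _ t =>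
      rw [kSmul0_mk]
      congr 1
      induction t with
      | zero => simp
      | tmul x y =>
        show (op (1 : R) • x) ⊗ₜ[ℤ] y = x ⊗ₜ[ℤ] y
        simp
      | add a b ha hb => rw [map_add, ha, hb]
  m1_add_left k k' r := map_add _ k k'
  m1_add_right := by
    intro k r r'
    try dsimp only
    induction k using Submodule.Quotient.induction_on with
    | _ t =>
      rw [kSmul1_mk, kSmul1_mk, kSmul1_mk, ← Submodule.Quotient.mk_add]
      congr 1
      induction t with
      | zero => simp
      | tmul x y =>
        show x ⊗ₜ[ℤ] (op (r + r') • y) = x ⊗ₜ[ℤ] (op r • y) + x ⊗ₜ[ℤ] (op r' • y)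
        simp [op_add, add_smul, TensorProduct.tmul_add]
      | add a b ha hb => rw [map_add, map_add, map_add, ha, hb]; abel
  m1_mul := by
    intro k r r'
    try dsimp only
    induction k using Submodule.Quotient.induction_on with
    | _ t =>
      rw [kSmul1_mk, kSmul1_mk, kSmul1_mk]
      congr 1
      induction t with
      | zero => simp
      | tmul x y =>
        show x ⊗ₜ[ℤ] (op (r * r') • y) = x ⊗ₜ[ℤ] (op r' • op r • y)
        simp [op_mul, mul_smul]
      | add a b ha hb => rw [map_add, map_add, map_add, ha, hb]
  m1_one := by
    intro k
    try dsimp only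
    induction k using Submodule.Quotient.induction_on with
    | _ t =>
      rw [kSmul1_mk]
      congr 1
      induction t with
      | zero => simp
      | tmul x y =>
        show x ⊗ₜ[ℤ] (op (1 : R) • y) = x ⊗ₜ[ℤ] y
        simp
      | add a b ha hb => rw [map_add, ha, hb]
  comm := by
    intro k a c
    try dsimp only
    induction k using Submodule.Quotient.induction_on with
    | _ t =>
      rw [kSmul0_mk, kSmul1_mk, kSmul1_mk, kSmul0_mk]
      congr 1
      induction t with
      | zero => simp
      | tmul x y => rfl
      | add p q hp hq => rw [map_add, map_add, map_add, map_add, hp, hq]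

/-- The universal general bilinear form `b_α : M × M → K_α`. -/
noncomputable def balpha (α : Module.End Rᵐᵒᵖ M → Module.End Rᵐᵒᵖ M) :
    GBF R M (Kalpha α) (KalphaDM α) where
  b x y := Submodule.Quotient.mk (x ⊗ₜ[ℤ] y)
  add_left x x' y := by
    try dsimp only
    rw [TensorProduct.add_tmul, Submodule.Quotient.mk_add]
  add_right x y y' := by
    try dsimp only
    rw [TensorProduct.tmul_add, Submodule.Quotient.mk_add]
  smul_left x y r := by
    show _ = kSmul0 α r (Submodule.Quotient.mk (x ⊗ₜ[ℤ] y))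
    rw [kSmul0_mk]
    congr 1
  smul_right x y r := by
    show _ = kSmul1 α r (Submodule.Quotient.mk (x ⊗ₜ[ℤ] y))
    rw [kSmul1_mk]
    congr 1

end Kalpha

end Core

/-- `M` is a generator of `Mod-R`: `R_R` is a direct summand of `Mⁿ` for some `n ∈ ℕ`. -/
def IsGenerator (R : Type u) [Ring R] (M : Type v) [AddCommGroup M] [Module Rᵐᵒᵖ M] : Prop :=
  ∃ (n : ℕ) (i : R →ₗ[Rᵐᵒᵖ] (Fin n → M)) (p : (Fin n → M) →ₗ[Rᵐᵒᵖ] R), ∀ r : R, p (i r) = r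
section Aux

variable {R : Type u} [Ring R] {M : Type v} [AddCommGroup M] [Module Rᵐᵒᵖ M]

namespace DoubleModule

variable {K : Type*} [AddCommGroup K] (DK : DoubleModule R K)

lemma m0_zero (r : R) : DK.m0 0 r = 0 := by
  have h := DK.m0_add_left 0 0 r
  rw [add_zero] at h
  exact (add_eq_left.mp h.symm)

lemma m1_zero (r : R) : DK.m1 0 r = 0 := by
  have h := DK.m1_add_left 0 0 r
  rw [add_zero] at h
  exact (add_eq_left.mp h.symm)

lemma m0_sum_right {ι : Type*} (k : K) (s : Finset ι) (f : ι → R) :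
    DK.m0 k (∑ j ∈ s, f j) = ∑ j ∈ s, DK.m0 k (f j) :=
  map_sum (AddMonoidHom.mk' (DK.m0 k) (DK.m0_add_right k)) f s

end DoubleModule

namespace GBF

variable {K : Type w} [AddCommGroup K] {DK : DoubleModule R K} (β : GBF R M K DK)

lemma b_zero_left (y : M) : β.b 0 y = 0 := by
  have h := β.add_left 0 0 y
  rw [add_zero] at h
  exact (add_eq_left.mp h.symm)

lemma b_zero_right (x : M) : β.b x 0 = 0 := by
  have h := β.add_right x 0 0
  rw [add_zero] at h
  exact (add_eq_left.mp h.symm)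

lemma b_sub_right (x y y' : M) : β.b x (y - y') = β.b x y - β.b x y' :=
  map_sub (AddMonoidHom.mk' (β.b x) (β.add_right x)) y y'

lemma b_sub_left (x x' y : M) : β.b (x - x') y = β.b x y - β.b x' y :=
  map_sub (AddMonoidHom.mk' (fun x => β.b x y) (fun a b => β.add_left a b y)) x x'

end GBF

/-- The endomorphism `m ↦ q m • x`. -/
def wk (x : M) (q : M →ₗ[Rᵐᵒᵖ] Rᵐᵒᵖ) : Module.End Rᵐᵒᵖ M where
  toFun m := q m • x
  map_add' a b := by simp only [map_add, add_smul]
  map_smul' c m := by simp only [map_smul, RingHom.id_apply, smul_eq_mul, mul_smul]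

@[simp] lemma wk_apply (x : M) (q : M →ₗ[Rᵐᵒᵖ] Rᵐᵒᵖ) (m : M) : wk x q m = q m • x := rfl

lemma wk_add (x x' : M) (q : M →ₗ[Rᵐᵒᵖ] Rᵐᵒᵖ) : wk (x + x') q = wk x q + wk x' q :=
  LinearMap.ext fun m => by simp [smul_add]

lemma wk_endo (w : Module.End Rᵐᵒᵖ M) (x : M) (q : M →ₗ[Rᵐᵒᵖ] Rᵐᵒᵖ) :
    wk (w x) q = w * wk x q :=
  LinearMap.ext fun m => by simp [Module.End.mul_apply, map_smul]

/-- Lift a biadditive map on `M × M` to `M ⊗[ℤ] M`. -/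
noncomputable def liftBil {N : Type*} [AddCommGroup N] (g : M → M → N)
    (h1 : ∀ x x' y, g (x + x') y = g x y + g x' y)
    (h2 : ∀ x y y', g x (y + y') = g x y + g x y') : M ⊗[ℤ] M →ₗ[ℤ] N :=
  TensorProduct.lift (LinearMap.mk₂ ℤ g h1
    (fun n x y => (AddMonoidHom.mk' (fun x => g x y) (fun a b => h1 a b y)).map_zsmul n x)
    h2
    (fun n x y => (AddMonoidHom.mk' (g x) (h2 x)).map_zsmul n y))

@[simp] lemma liftBil_tmul {N : Type*} [AddCommGroup N] (g : M → M → N) (h1) (h2) (x y : M) :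
    liftBil g h1 h2 (x ⊗ₜ[ℤ] y) = g x y := rfl

/-- Descend a biadditive map compatible with the relations to `K_α`. -/
noncomputable def liftKQ (α : Module.End Rᵐᵒᵖ M → Module.End Rᵐᵒᵖ M) {N : Type*} [AddCommGroup N]
    (g : M → M → N)
    (h1 : ∀ x x' y, g (x + x') y = g x y + g x' y)
    (h2 : ∀ x y y', g x (y + y') = g x y + g x y')
    (hrel : ∀ (w : Module.End Rᵐᵒᵖ M) (x y : M), g (w x) y = g x (α w y)) :
    Kalpha α →ₗ[ℤ] N :=
  Submodule.liftQ _ (liftBil g h1 h2) (by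
    rw [kalphaRel, Submodule.span_le]
    rintro _ ⟨w, x, y, rfl⟩
    simp only [SetLike.mem_coe, LinearMap.mem_ker, map_sub, liftBil_tmul, hrel, sub_self])

@[simp] lemma liftKQ_mk (α : Module.End Rᵐᵒᵖ M → Module.End Rᵐᵒᵖ M) {N : Type*}
    [AddCommGroup N] (g : M → M → N) (h1) (h2) (hrel) (x y : M) :
    liftKQ α g h1 h2 hrel (Submodule.Quotient.mk (x ⊗ₜ[ℤ] y)) = g x y := rfl

/-- The defining relation of `K_α`. -/
lemma mk_rel (α : Module.End Rᵐᵒᵖ M → Module.End Rᵐᵒᵖ M) (w : Module.End Rᵐᵒᵖ M) (x y : M) :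
    (Submodule.Quotient.mk ((w x) ⊗ₜ[ℤ] y) : Kalpha α) =
      Submodule.Quotient.mk (x ⊗ₜ[ℤ] (α w y)) :=
  (Submodule.Quotient.eq _).mpr (Submodule.subset_span ⟨w, x, y, rfl⟩)

lemma smulLeftMap_tmul (r : R) (x y : M) :
    smulLeftMap r (x ⊗ₜ[ℤ] y) = (op r • x) ⊗ₜ[ℤ] y := by
  simp [smulLeftMap]; rfl

lemma smulRightMap_tmul (r : R) (x y : M) :
    smulRightMap r (x ⊗ₜ[ℤ] y) = x ⊗ₜ[ℤ] (op r • y) := by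
  simp [smulRightMap]; rfl

lemma m0_mk (α : Module.End Rᵐᵒᵖ M → Module.End Rᵐᵒᵖ M) (t : M ⊗[ℤ] M) (r : R) :
    (KalphaDM (M := M) α).m0 (Submodule.Quotient.mk t) r =
      Submodule.Quotient.mk (smulLeftMap r t) := kSmul0_mk α r t

lemma m1_mk (α : Module.End Rᵐᵒᵖ M → Module.End Rᵐᵒᵖ M) (t : M ⊗[ℤ] M) (r : R) :
    (KalphaDM (M := M) α).m1 (Submodule.Quotient.mk t) r =
      Submodule.Quotient.mk (smulRightMap r t) := kSmul1_mk α r t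

lemma balpha_b (α : Module.End Rᵐᵒᵖ M → Module.End Rᵐᵒᵖ M) (x y : M) :
    (balpha α).b x y = (Submodule.Quotient.mk (x ⊗ₜ[ℤ] y) : Kalpha α) := rfl

lemma mk_sum {ι : Type*} (α : Module.End Rᵐᵒᵖ M → Module.End Rᵐᵒᵖ M) (s : Finset ι)
    (g : ι → M ⊗[ℤ] M) :
    (Submodule.Quotient.mk (∑ j ∈ s, g j) : Kalpha α) =
      ∑ j ∈ s, (Submodule.Quotient.mk (g j) : Kalpha α) :=
  map_sum (kalphaRel α).mkQ g s

end Aux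
section Aux2

variable {R : Type u} [Ring R] {M : Type v} [AddCommGroup M] [Module Rᵐᵒᵖ M]

/-- The map `x ⊗ y ↦ α(w_{x,q}) y` on `K_α`. -/
noncomputable def zmap (α : Module.End Rᵐᵒᵖ M → Module.End Rᵐᵒᵖ M)
    (hadd : ∀ u v, α (u + v) = α u + α v)
    (hmul : ∀ u v : Module.End Rᵐᵒᵖ M, α (u * v) = α v * α u)
    (q : M →ₗ[Rᵐᵒᵖ] Rᵐᵒᵖ) : Kalpha α →ₗ[ℤ] M :=
  liftKQ α (fun x y => α (wk x q) y)
    (fun x x' y => by rw [wk_add, hadd, LinearMap.add_apply])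
    (fun x y y' => map_add _ y y')
    (fun w x y => by rw [wk_endo, hmul, Module.End.mul_apply])

@[simp] lemma zmap_mk (α : Module.End Rᵐᵒᵖ M → Module.End Rᵐᵒᵖ M) (hadd) (hmul)
    (q : M →ₗ[Rᵐᵒᵖ] Rᵐᵒᵖ) (x y : M) :
    zmap α hadd hmul q (Submodule.Quotient.mk (x ⊗ₜ[ℤ] y)) = α (wk x q) y := rfl

/-- The map `x ⊗ y ↦ α⁻¹(w_{y,q}) x` on `K_α`. -/
noncomputable def hmap (α αinv : Module.End Rᵐᵒᵖ M → Module.End Rᵐᵒᵖ M)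
    (hinvadd : ∀ u v, αinv (u + v) = αinv u + αinv v)
    (hinvmul : ∀ u v : Module.End Rᵐᵒᵖ M, αinv (u * v) = αinv v * αinv u)
    (hlo : ∀ u, αinv (α u) = u)
    (q : M →ₗ[Rᵐᵒᵖ] Rᵐᵒᵖ) : Kalpha α →ₗ[ℤ] M :=
  liftKQ α (fun x y => αinv (wk y q) x)
    (fun x x' y => map_add _ x x')
    (fun x y y' => by rw [wk_add, hinvadd, LinearMap.add_apply])
    (fun w x y => by rw [wk_endo, hinvmul, hlo, Module.End.mul_apply])

@[simp] lemma hmap_mk (α αinv : Module.End Rᵐᵒᵖ M → Module.End Rᵐᵒᵖ M) (hinvadd) (hinvmul)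
    (hlo) (q : M →ₗ[Rᵐᵒᵖ] Rᵐᵒᵖ) (x y : M) :
    hmap α αinv hinvadd hinvmul hlo q (Submodule.Quotient.mk (x ⊗ₜ[ℤ] y)) = αinv (wk y q) x :=
  rfl

lemma hmap_m0 (α αinv : Module.End Rᵐᵒᵖ M → Module.End Rᵐᵒᵖ M) (hinvadd) (hinvmul) (hlo)
    (q : M →ₗ[Rᵐᵒᵖ] Rᵐᵒᵖ) (k : Kalpha α) (r : R) :
    hmap α αinv hinvadd hinvmul hlo q ((KalphaDM α).m0 k r) =
      op r • hmap α αinv hinvadd hinvmul hlo q k := by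
  induction k using Submodule.Quotient.induction_on with
  | _ t =>
    rw [m0_mk]
    induction t with
    | zero => simp
    | tmul x y =>
      rw [smulLeftMap_tmul, hmap_mk, hmap_mk, map_smul]
    | add a b ha hb =>
      rw [map_add, Submodule.Quotient.mk_add, map_add, Submodule.Quotient.mk_add, map_add,
        ha, hb, smul_add]

lemma zmap_m1 (α : Module.End Rᵐᵒᵖ M → Module.End Rᵐᵒᵖ M) (hadd) (hmul)
    (q : M →ₗ[Rᵐᵒᵖ] Rᵐᵒᵖ) (k : Kalpha α) (r : R) :
    zmap α hadd hmul q ((KalphaDM α).m1 k r) = op r • zmap α hadd hmul q k := by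
  induction k using Submodule.Quotient.induction_on with
  | _ t =>
    rw [m1_mk]
    induction t with
    | zero => simp
    | tmul x y =>
      rw [smulRightMap_tmul, zmap_mk, zmap_mk, map_smul]
    | add a b ha hb =>
      rw [map_add, Submodule.Quotient.mk_add, map_add, Submodule.Quotient.mk_add, map_add,
        ha, hb, smul_add]

/-- Identity (I0): `k •₀ q(m) = m ⊗ Z_q(k)`. -/
lemma I0 (α : Module.End Rᵐᵒᵖ M → Module.End Rᵐᵒᵖ M) (hadd) (hmul)
    (q : M →ₗ[Rᵐᵒᵖ] Rᵐᵒᵖ) (k : Kalpha α) (m : M) :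
    (KalphaDM α).m0 k (unop (q m)) =
      Submodule.Quotient.mk (m ⊗ₜ[ℤ] zmap α hadd hmul q k) := by
  induction k using Submodule.Quotient.induction_on with
  | _ t =>
    rw [m0_mk]
    induction t with
    | zero => simp
    | tmul x y =>
      rw [smulLeftMap_tmul, zmap_mk, op_unop]
      have : op (unop (q m)) • x = wk x q m := rfl
      calc (Submodule.Quotient.mk ((q m • x) ⊗ₜ[ℤ] y) : Kalpha α)
          = Submodule.Quotient.mk ((wk x q m) ⊗ₜ[ℤ] y) := rfl
        _ = Submodule.Quotient.mk (m ⊗ₜ[ℤ] α (wk x q) y) := mk_rel α (wk x q) m y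
    | add a b ha hb =>
      rw [map_add, Submodule.Quotient.mk_add, Submodule.Quotient.mk_add, map_add, ha, hb,
        TensorProduct.tmul_add, Submodule.Quotient.mk_add]

end Aux2
section Aux3

variable {R : Type u} [Ring R] {M : Type v} [AddCommGroup M] [Module Rᵐᵒᵖ M]

lemma IsAntiAuto.exists_inv {W : Type*} [Ring W] {α : W → W} (hα : IsAntiAuto α) :
    ∃ αinv : W → W, (∀ u v, αinv (u + v) = αinv u + αinv v) ∧
      (∀ u v, αinv (u * v) = αinv v * αinv u) ∧
      (∀ u, αinv (α u) = u) ∧ (∀ u, α (αinv u) = u) := by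
  obtain ⟨⟨hadd, hone, hmul⟩, hbij⟩ := hα
  let e := Equiv.ofBijective α hbij
  have hro : ∀ u, α (e.symm u) = u := fun u => e.apply_symm_apply u
  refine ⟨fun u => e.symm u, ?_, ?_, fun u => e.symm_apply_apply u, hro⟩
  · intro u v
    apply hbij.1
    rw [hro, hadd, hro, hro]
  · intro u v
    apply hbij.1
    rw [hro, hmul, hro, hro]

/-- Identity (E): `k = ∑ⱼ H_{pⱼ}(k) ⊗ xⱼ`. -/
lemma idE (α αinv : Module.End Rᵐᵒᵖ M → Module.End Rᵐᵒᵖ M)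
    (hiadd : ∀ u v, αinv (u + v) = αinv u + αinv v)
    (himul : ∀ u v : Module.End Rᵐᵒᵖ M, αinv (u * v) = αinv v * αinv u)
    (hlo : ∀ u, αinv (α u) = u) (hro : ∀ u, α (αinv u) = u)
    {n : ℕ} (xs : Fin n → M) (pf : Fin n → (M →ₗ[Rᵐᵒᵖ] Rᵐᵒᵖ))
    (hgen1 : ∑ j, pf j (xs j) = 1) (k : Kalpha α) :
    k = ∑ j, (Submodule.Quotient.mk
      ((hmap α αinv hiadd himul hlo (pf j) k) ⊗ₜ[ℤ] xs j) : Kalpha α) := by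
  induction k using Submodule.Quotient.induction_on with
  | _ t =>
    induction t with
    | zero => simp
    | tmul x y =>
      simp only [hmap_mk]
      symm
      calc ∑ j, (Submodule.Quotient.mk ((αinv (wk y (pf j)) x) ⊗ₜ[ℤ] xs j) : Kalpha α)
          = ∑ j, (Submodule.Quotient.mk (x ⊗ₜ[ℤ] (α (αinv (wk y (pf j))) (xs j))) : Kalpha α) :=
            Finset.sum_congr rfl fun j _ => mk_rel α _ x (xs j)
        _ = ∑ j, (Submodule.Quotient.mk (x ⊗ₜ[ℤ] ((pf j) (xs j) • y)) : Kalpha α) := by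
            simp only [hro, wk_apply]
        _ = Submodule.Quotient.mk (x ⊗ₜ[ℤ] y) := by
            rw [← mk_sum, ← TensorProduct.tmul_sum, ← Finset.sum_smul, hgen1, one_smul]
    | add a b ha hb =>
      conv_lhs => rw [Submodule.Quotient.mk_add, ha, hb]
      rw [← Finset.sum_add_distrib]
      refine Finset.sum_congr rfl fun j _ => ?_
      rw [Submodule.Quotient.mk_add, map_add, TensorProduct.add_tmul, Submodule.Quotient.mk_add]

/-- Identity (E₀): `k = ∑ⱼ xⱼ ⊗ Z_{pⱼ}(k)`. -/
lemma idE0 (α : Module.End Rᵐᵒᵖ M → Module.End Rᵐᵒᵖ M)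
    (hadd : ∀ u v, α (u + v) = α u + α v)
    (hmul : ∀ u v : Module.End Rᵐᵒᵖ M, α (u * v) = α v * α u)
    {n : ℕ} (xs : Fin n → M) (pf : Fin n → (M →ₗ[Rᵐᵒᵖ] Rᵐᵒᵖ))
    (hgen1 : ∑ j, pf j (xs j) = 1) (k : Kalpha α) :
    k = ∑ j, (Submodule.Quotient.mk
      (xs j ⊗ₜ[ℤ] (zmap α hadd hmul (pf j) k)) : Kalpha α) := by
  induction k using Submodule.Quotient.induction_on with
  | _ t =>
    induction t with
    | zero => simp
    | tmul x y =>
      simp only [zmap_mk]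
      symm
      calc ∑ j, (Submodule.Quotient.mk (xs j ⊗ₜ[ℤ] (α (wk x (pf j)) y)) : Kalpha α)
          = ∑ j, (Submodule.Quotient.mk ((wk x (pf j) (xs j)) ⊗ₜ[ℤ] y) : Kalpha α) :=
            Finset.sum_congr rfl fun j _ => (mk_rel α (wk x (pf j)) (xs j) y).symm
        _ = Submodule.Quotient.mk ((∑ j, (pf j) (xs j) • x) ⊗ₜ[ℤ] y) := by
            simp only [wk_apply]
            rw [← mk_sum, ← TensorProduct.sum_tmul]
        _ = Submodule.Quotient.mk (x ⊗ₜ[ℤ] y) := by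
            rw [← Finset.sum_smul, hgen1, one_smul]
    | add a b ha hb =>
      conv_lhs => rw [Submodule.Quotient.mk_add, ha, hb]
      rw [← Finset.sum_add_distrib]
      refine Finset.sum_congr rfl fun j _ => ?_
      rw [Submodule.Quotient.mk_add, map_add, TensorProduct.tmul_add, Submodule.Quotient.mk_add]

end Aux3
section Aux4

variable {R : Type u} [Ring R] {M : Type v} [AddCommGroup M] [Module Rᵐᵒᵖ M]
variable (α : Module.End Rᵐᵒᵖ M → Module.End Rᵐᵒᵖ M)

lemma balpha_isAdjoint : (balpha (M := M) α).IsAdjoint α := fun w x y => mk_rel α w x y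

lemma addhom_zero {W : Type*} [Ring W] {α : W → W}
    (hadd : ∀ u v, α (u + v) = α u + α v) : α 0 = 0 := by
  have h := hadd 0 0
  rw [add_zero] at h
  exact (add_eq_left.mp h.symm)

lemma balpha_rightReg_of_data (hα : IsAntiAuto α) {n : ℕ} (xs : Fin n → M)
    (pf : Fin n → (M →ₗ[Rᵐᵒᵖ] Rᵐᵒᵖ)) (hgen1 : ∑ j, pf j (xs j) = 1) :
    (balpha (M := M) α).RightRegular := by
  obtain ⟨αinv, hiadd, himul, hlo, hro⟩ := hα.exists_inv
  obtain ⟨⟨hadd, hone, hmul⟩, hbij⟩ := hα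
  constructor
  · intro z z' h
    have hd : ∀ x : M, (Submodule.Quotient.mk (x ⊗ₜ[ℤ] (z - z')) : Kalpha α) = 0 := by
      intro x
      rw [TensorProduct.tmul_sub, Submodule.Quotient.mk_sub, sub_eq_zero]
      exact h x
    have hw : ∀ j, wk (z - z') (pf j) = 0 := by
      intro j
      have h1 : αinv (wk (z - z') (pf j)) = 0 := by
        apply LinearMap.ext
        intro x
        have h2 := congrArg (hmap α αinv hiadd himul hlo (pf j)) (hd x)
        rwa [hmap_mk, map_zero] at h2
      have h3 := congrArg α h1
      rwa [hro, addhom_zero hadd] at h3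
    have hzz : z - z' = 0 := by
      have h2 : z - z' = ∑ j, wk (z - z') (pf j) (xs j) := by
        simp only [wk_apply]
        rw [← Finset.sum_smul, hgen1, one_smul]
      rw [h2]
      refine Finset.sum_eq_zero fun j _ => ?_
      rw [hw j]
      rfl
    exact sub_eq_zero.mp hzz
  · intro f hfadd hm0
    have hjlin : ∀ j : Fin n, ∃ hj : Module.End Rᵐᵒᵖ M,
        ∀ x, hj x = hmap α αinv hiadd himul hlo (pf j) (f x) := by
      intro j
      refine ⟨{ toFun := fun x => hmap α αinv hiadd himul hlo (pf j) (f x),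
                map_add' := fun a b => by rw [hfadd, map_add],
                map_smul' := fun c x => ?_ }, fun x => rfl⟩
      rw [← op_unop c, hm0, hmap_m0]
      rfl
    choose hj hjspec using hjlin
    refine ⟨∑ j, α (hj j) (xs j), fun x => ?_⟩
    calc f x = ∑ j, (Submodule.Quotient.mk
          ((hmap α αinv hiadd himul hlo (pf j) (f x)) ⊗ₜ[ℤ] xs j) : Kalpha α) :=
          idE α αinv hiadd himul hlo hro xs pf hgen1 (f x)
      _ = ∑ j, (Submodule.Quotient.mk (((hj j) x) ⊗ₜ[ℤ] xs j) : Kalpha α) := by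
          simp only [← hjspec]
      _ = ∑ j, (Submodule.Quotient.mk (x ⊗ₜ[ℤ] (α (hj j) (xs j))) : Kalpha α) :=
          Finset.sum_congr rfl fun j _ => mk_rel α (hj j) x (xs j)
      _ = Submodule.Quotient.mk (x ⊗ₜ[ℤ] ∑ j, α (hj j) (xs j)) := by
          rw [← mk_sum, ← TensorProduct.tmul_sum]

lemma balpha_leftReg_of_data (hα : IsAntiAuto α) {n : ℕ} (xs : Fin n → M)
    (pf : Fin n → (M →ₗ[Rᵐᵒᵖ] Rᵐᵒᵖ)) (hgen1 : ∑ j, pf j (xs j) = 1) :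
    (balpha (M := M) α).LeftRegular := by
  obtain ⟨αinv, hiadd, himul, hlo, hro⟩ := hα.exists_inv
  obtain ⟨⟨hadd, hone, hmul⟩, hbij⟩ := hα
  constructor
  · intro z z' h
    have hd : ∀ y : M, (Submodule.Quotient.mk ((z - z') ⊗ₜ[ℤ] y) : Kalpha α) = 0 := by
      intro y
      rw [TensorProduct.sub_tmul, Submodule.Quotient.mk_sub, sub_eq_zero]
      exact h y
    have hw : ∀ j, wk (z - z') (pf j) = 0 := by
      intro j
      have h1 : α (wk (z - z') (pf j)) = 0 := by
        apply LinearMap.ext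
        intro y
        have h2 := congrArg (zmap α hadd hmul (pf j)) (hd y)
        rwa [zmap_mk, map_zero] at h2
      apply hbij.1
      rw [h1, addhom_zero hadd]
    have hzz : z - z' = 0 := by
      have h2 : z - z' = ∑ j, wk (z - z') (pf j) (xs j) := by
        simp only [wk_apply]
        rw [← Finset.sum_smul, hgen1, one_smul]
      rw [h2]
      refine Finset.sum_eq_zero fun j _ => ?_
      rw [hw j]
      rfl
    exact sub_eq_zero.mp hzz
  · intro f hfadd hm1
    have hjlin : ∀ j : Fin n, ∃ gj : Module.End Rᵐᵒᵖ M,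
        ∀ y, gj y = zmap α hadd hmul (pf j) (f y) := by
      intro j
      refine ⟨{ toFun := fun y => zmap α hadd hmul (pf j) (f y),
                map_add' := fun a b => by rw [hfadd, map_add],
                map_smul' := fun c y => ?_ }, fun y => rfl⟩
      rw [← op_unop c, hm1, zmap_m1]
      rfl
    choose gj gjspec using hjlin
    refine ⟨∑ j, αinv (gj j) (xs j), fun y => ?_⟩
    calc f y = ∑ j, (Submodule.Quotient.mk
          (xs j ⊗ₜ[ℤ] (zmap α hadd hmul (pf j) (f y))) : Kalpha α) :=
          idE0 α hadd hmul xs pf hgen1 (f y)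
      _ = ∑ j, (Submodule.Quotient.mk (xs j ⊗ₜ[ℤ] ((gj j) y)) : Kalpha α) := by
          simp only [← gjspec]
      _ = ∑ j, (Submodule.Quotient.mk (xs j ⊗ₜ[ℤ] (α (αinv (gj j)) y)) : Kalpha α) := by
          simp only [hro]
      _ = ∑ j, (Submodule.Quotient.mk ((αinv (gj j) (xs j)) ⊗ₜ[ℤ] y) : Kalpha α) :=
          Finset.sum_congr rfl fun j _ => (mk_rel α (αinv (gj j)) (xs j) y).symm
      _ = Submodule.Quotient.mk ((∑ j, αinv (gj j) (xs j)) ⊗ₜ[ℤ] y) := by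
          rw [← mk_sum, ← TensorProduct.sum_tmul]

lemma balpha_rightReg_of_dualBasis (hα : IsAntiEndo α) {m : ℕ} (us : Fin m → M)
    (ψ : Fin m → (M →ₗ[Rᵐᵒᵖ] Rᵐᵒᵖ)) (hdb : ∀ x, ∑ t, ψ t x • us t = x) :
    (balpha (M := M) α).RightRegular := by
  obtain ⟨hadd, hone, hmul⟩ := hα
  have hsum1 : (∑ t, wk (us t) (ψ t)) = (1 : Module.End Rᵐᵒᵖ M) := by
    apply LinearMap.ext
    intro x
    rw [LinearMap.sum_apply]
    simp only [wk_apply]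
    rw [hdb]
    rfl
  constructor
  · intro z z' h
    have hd : ∀ x : M, (Submodule.Quotient.mk (x ⊗ₜ[ℤ] (z - z')) : Kalpha α) = 0 := by
      intro x
      rw [TensorProduct.tmul_sub, Submodule.Quotient.mk_sub, sub_eq_zero]
      exact h x
    have hzz : z - z' = 0 := by
      have e1 : z - z' = α (∑ t, wk (us t) (ψ t)) (z - z') := by
        rw [hsum1, hone]
        rfl
      have e2 : α (∑ t, wk (us t) (ψ t)) = ∑ t, α (wk (us t) (ψ t)) :=
        map_sum (AddMonoidHom.mk' α hadd) _ _
      rw [e1, e2, LinearMap.sum_apply]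
      refine Finset.sum_eq_zero fun t _ => ?_
      have h2 := congrArg (zmap α hadd hmul (ψ t)) (hd (us t))
      rwa [zmap_mk, map_zero] at h2
    exact sub_eq_zero.mp hzz
  · intro f hfadd hm0
    refine ⟨∑ t, zmap α hadd hmul (ψ t) (f (us t)), fun x => ?_⟩
    have e1 : f x = ∑ t, f (ψ t x • us t) := by
      conv_lhs => rw [← hdb x]
      exact map_sum (AddMonoidHom.mk' f hfadd) _ _
    have e2 : ∀ t, f (ψ t x • us t) =
        Submodule.Quotient.mk (x ⊗ₜ[ℤ] zmap α hadd hmul (ψ t) (f (us t))) := by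
      intro t
      have h1 : f (ψ t x • us t) = (KalphaDM α).m0 (f (us t)) (unop (ψ t x)) := by
        rw [← hm0 (us t) (unop (ψ t x)), op_unop]
      rw [h1, I0]
    calc f x = ∑ t, f (ψ t x • us t) := e1
      _ = ∑ t, (Submodule.Quotient.mk
            (x ⊗ₜ[ℤ] zmap α hadd hmul (ψ t) (f (us t))) : Kalpha α) :=
          Finset.sum_congr rfl fun t _ => e2 t
      _ = Submodule.Quotient.mk (x ⊗ₜ[ℤ] ∑ t, zmap α hadd hmul (ψ t) (f (us t))) := by
          rw [← mk_sum, ← TensorProduct.tmul_sum]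

end Aux4
section Aux5

variable {R : Type u} [Ring R] {M : Type v} [AddCommGroup M] [Module Rᵐᵒᵖ M]

/-- `op` as an `Rᵐᵒᵖ`-linear map. -/
def oplin : R →ₗ[Rᵐᵒᵖ] Rᵐᵒᵖ where
  toFun := op
  map_add' a b := rfl
  map_smul' c s := rfl

/-- Extract the data `(xs, pf)` with `∑ⱼ pfⱼ(xsⱼ) = 1` from `IsGenerator`. -/
lemma IsGenerator.exists_data (hgen : IsGenerator R M) :
    ∃ (n : ℕ) (xs : Fin n → M) (pf : Fin n → (M →ₗ[Rᵐᵒᵖ] Rᵐᵒᵖ)),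
      ∑ j, pf j (xs j) = 1 := by
  obtain ⟨n, i, p, hip⟩ := hgen
  refine ⟨n, fun j => i 1 j, fun j =>
    oplin.comp (p.comp (LinearMap.single Rᵐᵒᵖ (fun _ : Fin n => M) j)), ?_⟩
  have h0 : ∀ j : Fin n, (LinearMap.single Rᵐᵒᵖ (fun _ : Fin n => M) j) (i 1 j) =
      Pi.single j (i 1 j) := fun j => rfl
  show ∑ j, op (p ((LinearMap.single Rᵐᵒᵖ (fun _ : Fin n => M) j) (i 1 j))) = 1
  simp only [h0]
  have h1 : ∑ j, op (p (Pi.single j (i 1 j))) = op (∑ j, p (Pi.single j (i 1 j))) :=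
    (map_sum (opAddEquiv : R ≃+ Rᵐᵒᵖ) _ _).symm
  rw [h1, ← map_sum, Finset.univ_sum_single (i 1), hip 1, op_one]

/-- Extract a finite dual basis from finite + projective. -/
lemma exists_dualBasis (hfin : Module.Finite Rᵐᵒᵖ M) (hproj : Module.Projective Rᵐᵒᵖ M) :
    ∃ (m : ℕ) (us : Fin m → M) (ψ : Fin m → (M →ₗ[Rᵐᵒᵖ] Rᵐᵒᵖ)),
      ∀ x, ∑ t, ψ t x • us t = x := by
  obtain ⟨nn, π, hπ⟩ := Module.Finite.exists_fin' Rᵐᵒᵖ M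
  obtain ⟨σ, hσ⟩ := Module.projective_lifting_property π LinearMap.id hπ
  refine ⟨nn, fun t => π (Pi.single t 1), fun t => (LinearMap.proj t).comp σ, fun x => ?_⟩
  have key : ∀ v : Fin nn → Rᵐᵒᵖ, ∑ t, v t • π (Pi.single t 1) = π v := by
    intro v
    have h1 : ∀ t, v t • π (Pi.single t 1) = π (Pi.single t (v t)) := by
      intro t
      rw [← map_smul]
      congr 1
      funext k
      by_cases h : k = t
      · subst h
        simp [Pi.single_eq_same]
      · simp [Pi.single_eq_of_ne h]
    simp only [h1]
    rw [← map_sum, Finset.univ_sum_single]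
  have h2 : ∀ t, ((LinearMap.proj t).comp σ) x = σ x t := fun t => rfl
  simp only [h2]
  rw [key (σ x)]
  exact LinearMap.congr_fun hσ x

end Aux5
section Aux6

variable {R : Type u} [Ring R] {M : Type v} [AddCommGroup M] [Module Rᵐᵒᵖ M]
variable {K : Type*} [AddCommGroup K] {DK : DoubleModule R K}

/-- Every right regular form admits an adjoint anti-endomorphism. -/
lemma exists_adjoint (β : GBF R M K DK) (hreg : β.RightRegular) :
    ∃ α : Module.End Rᵐᵒᵖ M → Module.End Rᵐᵒᵖ M, β.IsAdjoint α := by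
  obtain ⟨hinj, hsur⟩ := hreg
  have hex : ∀ (w : Module.End Rᵐᵒᵖ M) (y : M), ∃ z : M, ∀ x, β.b (w x) y = β.b x z := by
    intro w y
    obtain ⟨z, hz⟩ := hsur (fun x => β.b (w x) y)
      (fun a b => by rw [map_add, β.add_left])
      (fun x r => by rw [map_smul, β.smul_left])
    exact ⟨z, hz⟩
  choose A hA using hex
  have hAadd : ∀ w y y', A w (y + y') = A w y + A w y' := by
    intro w y y'
    apply hinj
    intro x
    calc β.b x (A w (y + y')) = β.b (w x) (y + y') := (hA w (y + y') x).symm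
      _ = β.b (w x) y + β.b (w x) y' := β.add_right _ _ _
      _ = β.b x (A w y) + β.b x (A w y') := by rw [hA w y x, hA w y' x]
      _ = β.b x (A w y + A w y') := (β.add_right _ _ _).symm
  have hAsmul : ∀ (w : Module.End Rᵐᵒᵖ M) (c : Rᵐᵒᵖ) (y : M), A w (c • y) = c • A w y := by
    intro w c y
    apply hinj
    intro x
    calc β.b x (A w (c • y)) = β.b (w x) (c • y) := (hA w _ x).symm
      _ = DK.m1 (β.b (w x) y) (unop c) := β.smul_right (w x) y (unop c)
      _ = DK.m1 (β.b x (A w y)) (unop c) := by rw [hA w y x]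
      _ = β.b x (c • A w y) := (β.smul_right x (A w y) (unop c)).symm
  refine ⟨fun w =>
    { toFun := A w
      map_add' := hAadd w
      map_smul' := fun c y => hAsmul w c y }, fun w x y => hA w y x⟩

/-- The adjoint of a right injective form is an anti-endomorphism. -/
lemma adjoint_isAntiEndo (β : GBF R M K DK) (hinj : β.RightInjective)
    (α : Module.End Rᵐᵒᵖ M → Module.End Rᵐᵒᵖ M) (hadj : β.IsAdjoint α) : IsAntiEndo α := by
  refine ⟨?_, ?_, ?_⟩
  · intro u v
    apply LinearMap.ext
    intro y
    apply hinj
    intro x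
    calc β.b x (α (u + v) y) = β.b ((u + v) x) y := (hadj (u + v) x y).symm
      _ = β.b (u x + v x) y := by rw [LinearMap.add_apply]
      _ = β.b (u x) y + β.b (v x) y := β.add_left _ _ _
      _ = β.b x (α u y) + β.b x (α v y) := by rw [hadj u x y, hadj v x y]
      _ = β.b x (α u y + α v y) := (β.add_right _ _ _).symm
      _ = β.b x ((α u + α v) y) := by rw [LinearMap.add_apply]
  · apply LinearMap.ext
    intro y
    apply hinj
    intro x
    calc β.b x (α 1 y) = β.b ((1 : Module.End Rᵐᵒᵖ M) x) y := (hadj 1 x y).symm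
      _ = β.b x y := by rw [Module.End.one_apply]
      _ = β.b x ((1 : Module.End Rᵐᵒᵖ M) y) := by rw [Module.End.one_apply]
  · intro u v
    apply LinearMap.ext
    intro y
    apply hinj
    intro x
    calc β.b x (α (u * v) y) = β.b ((u * v) x) y := (hadj _ x y).symm
      _ = β.b (u (v x)) y := by rw [Module.End.mul_apply]
      _ = β.b (v x) (α u y) := hadj u (v x) y
      _ = β.b x (α v (α u y)) := hadj v x (α u y)
      _ = β.b x ((α v * α u) y) := by rw [Module.End.mul_apply]

/-- The adjoint of a (left and right) regular form is bijective. -/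
lemma adjoint_bijective (β : GBF R M K DK) (hr : β.RightRegular) (hl : β.LeftRegular)
    (α : Module.End Rᵐᵒᵖ M → Module.End Rᵐᵒᵖ M) (hadj : β.IsAdjoint α) :
    Function.Bijective α := by
  constructor
  · intro u v huv
    apply LinearMap.ext
    intro x
    apply hl.1
    intro y
    calc β.b (u x) y = β.b x (α u y) := hadj u x y
      _ = β.b x (α v y) := by rw [huv]
      _ = β.b (v x) y := (hadj v x y).symm
  · intro v
    have hex : ∀ x : M, ∃ z : M, ∀ y, β.b x (v y) = β.b z y := by
      intro x
      obtain ⟨z, hz⟩ := hl.2 (fun y => β.b x (v y))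
        (fun a b => by rw [map_add, β.add_right])
        (fun y r => by rw [map_smul, β.smul_right])
      exact ⟨z, fun y => hz y⟩
    choose B hB using hex
    have hBadd : ∀ x x', B (x + x') = B x + B x' := by
      intro x x'
      apply hl.1
      intro y
      calc β.b (B (x + x')) y = β.b (x + x') (v y) := (hB (x + x') y).symm
        _ = β.b x (v y) + β.b x' (v y) := β.add_left _ _ _
        _ = β.b (B x) y + β.b (B x') y := by rw [hB x y, hB x' y]
        _ = β.b (B x + B x') y := (β.add_left _ _ _).symm
    have hBsmul : ∀ (c : Rᵐᵒᵖ) (x : M), B (c • x) = c • B x := by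
      intro c x
      apply hl.1
      intro y
      calc β.b (B (c • x)) y = β.b (c • x) (v y) := (hB _ y).symm
        _ = DK.m0 (β.b x (v y)) (unop c) := β.smul_left x (v y) (unop c)
        _ = DK.m0 (β.b (B x) y) (unop c) := by rw [hB x y]
        _ = β.b (c • B x) y := (β.smul_left (B x) y (unop c)).symm
    set w : Module.End Rᵐᵒᵖ M :=
      { toFun := B
        map_add' := hBadd
        map_smul' := fun c x => hBsmul c x } with hw
    refine ⟨w, ?_⟩
    apply LinearMap.ext
    intro y
    apply hr.1
    intro x
    calc β.b x (α w y) = β.b (w x) y := (hadj w x y).symm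
      _ = β.b x (v y) := (hB x y).symm

/-- Main similarity lemma: if `M` is a generator (given by explicit data) and `β` is
right regular with adjoint `α`, then `b_α` is similar to `β`. -/
lemma balpha_similar (β : GBF R M K DK) (hreg : β.RightRegular)
    (α : Module.End Rᵐᵒᵖ M → Module.End Rᵐᵒᵖ M) (hadj : β.IsAdjoint α)
    (hadd : ∀ u v, α (u + v) = α u + α v)
    (hmul : ∀ u v : Module.End Rᵐᵒᵖ M, α (u * v) = α v * α u)
    {n : ℕ} (xs : Fin n → M) (pf : Fin n → (M →ₗ[Rᵐᵒᵖ] Rᵐᵒᵖ))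
    (hgen1 : ∑ j, pf j (xs j) = 1) :
    (balpha (M := M) α).Similar β := by
  set F := liftKQ α β.b β.add_left β.add_right hadj with hF
  have hm0F : ∀ (k : Kalpha α) (r : R), F ((KalphaDM α).m0 k r) = DK.m0 (F k) r := by
    intro k r
    induction k using Submodule.Quotient.induction_on with
    | _ t =>
      rw [m0_mk]
      induction t with
      | zero => simp [DK.m0_zero]
      | tmul x y =>
        rw [smulLeftMap_tmul]
        exact β.smul_left x y r
      | add a b ha hb =>
        rw [map_add, Submodule.Quotient.mk_add, map_add, ha, hb,
          Submodule.Quotient.mk_add, map_add, DK.m0_add_left]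
  have hm1F : ∀ (k : Kalpha α) (r : R), F ((KalphaDM α).m1 k r) = DK.m1 (F k) r := by
    intro k r
    induction k using Submodule.Quotient.induction_on with
    | _ t =>
      rw [m1_mk]
      induction t with
      | zero => simp [DK.m1_zero]
      | tmul x y =>
        rw [smulRightMap_tmul]
        exact β.smul_right x y r
      | add a b ha hb =>
        rw [map_add, Submodule.Quotient.mk_add, map_add, ha, hb,
          Submodule.Quotient.mk_add, map_add, DK.m1_add_left]
  have c2 : ∀ (k : Kalpha α) (j : Fin n) (m : M),
      β.b m (zmap α hadd hmul (pf j) k) = DK.m0 (F k) (unop ((pf j) m)) := by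
    intro k j m
    induction k using Submodule.Quotient.induction_on with
    | _ t =>
      induction t with
      | zero => simp [β.b_zero_right, DK.m0_zero]
      | tmul x y =>
        rw [zmap_mk]
        calc β.b m (α (wk x (pf j)) y) = β.b ((wk x (pf j)) m) y := (hadj _ m y).symm
          _ = DK.m0 (β.b x y) (unop ((pf j) m)) := β.smul_left x y (unop ((pf j) m))
      | add a b ha hb =>
        rw [Submodule.Quotient.mk_add, map_add, β.add_right, ha, hb, map_add,
          DK.m0_add_left]
  have hker : ∀ k : Kalpha α, F k = 0 → k = 0 := by
    intro k hk
    have hz : ∀ j, zmap α hadd hmul (pf j) k = 0 := by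
      intro j
      apply hreg.1
      intro m
      rw [c2 k j m, hk, DK.m0_zero, β.b_zero_right]
    rw [idE0 α hadd hmul xs pf hgen1 k]
    refine Finset.sum_eq_zero fun j _ => ?_
    rw [hz j, TensorProduct.tmul_zero, Submodule.Quotient.mk_zero]
  have hinjF : Function.Injective F := by
    intro a b hab
    have h0 : F (a - b) = 0 := by rw [map_sub, hab, sub_self]
    exact sub_eq_zero.mp (hker _ h0)
  have hsurF : Function.Surjective F := by
    intro k
    have hzex : ∀ j : Fin n, ∃ z : M, ∀ y, DK.m0 k (unop ((pf j) y)) = β.b y z := by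
      intro j
      exact hreg.2 (fun y => DK.m0 k (unop ((pf j) y)))
        (fun a b => by rw [map_add, unop_add, DK.m0_add_right])
        (fun y r => by rw [map_smul, smul_eq_mul, unop_mul, unop_op, DK.m0_mul])
    choose z hzspec using hzex
    refine ⟨Submodule.Quotient.mk (∑ j, xs j ⊗ₜ[ℤ] z j), ?_⟩
    rw [mk_sum, map_sum]
    calc ∑ j, F (Submodule.Quotient.mk (xs j ⊗ₜ[ℤ] z j))
        = ∑ j, DK.m0 k (unop ((pf j) (xs j))) :=
          Finset.sum_congr rfl fun j _ => (hzspec j (xs j)).symm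
      _ = DK.m0 k (∑ j, unop ((pf j) (xs j))) := (DK.m0_sum_right k _ _).symm
      _ = k := by
          rw [show (∑ j, unop ((pf j) (xs j))) = unop (∑ j, (pf j) (xs j)) from
            (map_sum (opAddEquiv : R ≃+ Rᵐᵒᵖ).symm _ _).symm, hgen1, unop_one, DK.m0_one]
  exact ⟨⇑F, ⟨⟨fun a b => map_add F a b, hm0F, hm1F⟩, hinjF, hsurF⟩, fun x y => rfl⟩

/-- Similarity is symmetric. -/
lemma similar_symm {K1 : Type*} [AddCommGroup K1] {DK1 : DoubleModule R K1}
    {K2 : Type*} [AddCommGroup K2] {DK2 : DoubleModule R K2}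
    {β : GBF R M K1 DK1} {β' : GBF R M K2 DK2} (h : β.Similar β') : β'.Similar β := by
  obtain ⟨f, ⟨⟨fadd, f0, f1⟩, fbij⟩, hf⟩ := h
  let e := Equiv.ofBijective f fbij
  have he : ∀ k, f (e.symm k) = k := fun k => e.apply_symm_apply k
  refine ⟨fun k => e.symm k, ⟨⟨?_, ?_, ?_⟩, e.symm.bijective⟩, ?_⟩
  · intro a b
    apply fbij.1
    rw [he, fadd, he, he]
  · intro k r
    apply fbij.1
    rw [he, f0, he]
  · intro k r
    apply fbij.1
    rw [he, f1, he]
  · intro x y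
    rw [hf x y]
    exact (e.symm_apply_apply _).symm

/-- Similarity is transitive. -/
lemma similar_trans {K1 : Type*} [AddCommGroup K1] {DK1 : DoubleModule R K1}
    {K2 : Type*} [AddCommGroup K2] {DK2 : DoubleModule R K2}
    {K3 : Type*} [AddCommGroup K3] {DK3 : DoubleModule R K3}
    {β : GBF R M K1 DK1} {β' : GBF R M K2 DK2} {β'' : GBF R M K3 DK3}
    (h : β.Similar β') (h' : β'.Similar β'') : β.Similar β'' := by
  obtain ⟨f, ⟨⟨fadd, f0, f1⟩, fbij⟩, hf⟩ := h
  obtain ⟨g, ⟨⟨gadd, g0, g1⟩, gbij⟩, hg⟩ := h'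
  refine ⟨g ∘ f, ⟨⟨?_, ?_, ?_⟩, gbij.comp fbij⟩, ?_⟩
  · intro a b
    simp only [Function.comp_apply, fadd, gadd]
  · intro k r
    simp only [Function.comp_apply, f0, g0]
  · intro k r
    simp only [Function.comp_apply, f1, g1]
  · intro x y
    simp only [Function.comp_apply]
    rw [hg x y, hf x y]

/-- An adjoint transfers through similarity. -/
lemma similar_adjoint_transfer {K1 : Type*} [AddCommGroup K1] {DK1 : DoubleModule R K1}
    {K2 : Type*} [AddCommGroup K2] {DK2 : DoubleModule R K2}
    {β : GBF R M K1 DK1} {β' : GBF R M K2 DK2} (h : β.Similar β')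
    (α : Module.End Rᵐᵒᵖ M → Module.End Rᵐᵒᵖ M) (hadj : β.IsAdjoint α) :
    β'.IsAdjoint α := by
  obtain ⟨f, hiso, hf⟩ := h
  intro w x y
  rw [hf (w x) y, hf x (α w y), hadj w x y]

end Aux6

/-- The correspondence between bilinear forms (up to similarity) and
anti-endomorphisms of `End_R(M)`: (1) if `M` is a progenerator, `α ↦ b_α` and
`b ↦ α(b)` set up a bijection between similarity classes of right regular forms on `M`
and anti-endomorphisms of `W`; (2) if `M` is a generator, they set up a bijection
between similarity classes of (right and left) regular forms and anti-automorphisms. -/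
theorem stmt_11 {R : Type u} [Ring R] {M : Type v} [AddCommGroup M] [Module Rᵐᵒᵖ M] :
    -- (1) the progenerator case
    (Module.Finite Rᵐᵒᵖ M → Module.Projective Rᵐᵒᵖ M → IsGenerator R M →
      (∀ α : Module.End Rᵐᵒᵖ M → Module.End Rᵐᵒᵖ M, IsAntiEndo α →
        (balpha (M := M) α).RightRegular ∧ (balpha (M := M) α).IsAdjoint α) ∧
      (∀ (K : Type w) (iK : AddCommGroup K) (DK : DoubleModule R K) (β : GBF R M K DK),
        β.RightRegular → ∀ α : Module.End Rᵐᵒᵖ M → Module.End Rᵐᵒᵖ M, β.IsAdjoint α →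
          IsAntiEndo α ∧ (balpha (M := M) α).Similar β) ∧
      (∀ (K : Type w) (iK : AddCommGroup K) (DK : DoubleModule R K) (β : GBF R M K DK)
          (K' : Type w) (iK' : AddCommGroup K') (DK' : DoubleModule R K')
          (β' : GBF R M K' DK'),
        β.RightRegular → β'.RightRegular →
          (β.Similar β' ↔
            ∃ α : Module.End Rᵐᵒᵖ M → Module.End Rᵐᵒᵖ M, β.IsAdjoint α ∧ β'.IsAdjoint α))) ∧
    -- (2) the generator case
    (IsGenerator R M →
      (∀ α : Module.End Rᵐᵒᵖ M → Module.End Rᵐᵒᵖ M, IsAntiAuto α →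
        (balpha (M := M) α).RightRegular ∧ (balpha (M := M) α).LeftRegular ∧
          (balpha (M := M) α).IsAdjoint α) ∧
      (∀ (K : Type w) (iK : AddCommGroup K) (DK : DoubleModule R K) (β : GBF R M K DK),
        β.RightRegular → β.LeftRegular →
          ∀ α : Module.End Rᵐᵒᵖ M → Module.End Rᵐᵒᵖ M, β.IsAdjoint α →
            IsAntiAuto α ∧ (balpha (M := M) α).Similar β) ∧
      (∀ (K : Type w) (iK : AddCommGroup K) (DK : DoubleModule R K) (β : GBF R M K DK)
          (K' : Type w) (iK' : AddCommGroup K') (DK' : DoubleModule R K')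
          (β' : GBF R M K' DK'),
        β.RightRegular → β.LeftRegular → β'.RightRegular → β'.LeftRegular →
          (β.Similar β' ↔
            ∃ α : Module.End Rᵐᵒᵖ M → Module.End Rᵐᵒᵖ M, β.IsAdjoint α ∧ β'.IsAdjoint α))) := by
  constructor
  · -- part 1: the progenerator case
    intro hfin hproj hgen
    obtain ⟨m, us, ψ, hdb⟩ := exists_dualBasis hfin hproj
    obtain ⟨n, xs, pf, hgen1⟩ := hgen.exists_data
    refine ⟨?_, ?_, ?_⟩
    · intro α hα
      exact ⟨balpha_rightReg_of_dualBasis α hα us ψ hdb, balpha_isAdjoint α⟩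
    · intro K iK DK β hreg α hadj
      have hae := adjoint_isAntiEndo β hreg.1 α hadj
      exact ⟨hae, balpha_similar β hreg α hadj hae.1 hae.2.2 xs pf hgen1⟩
    · intro K iK DK β K' iK' DK' β' hreg hreg'
      constructor
      · intro hsim
        obtain ⟨α, hadj⟩ := exists_adjoint β hreg
        exact ⟨α, hadj, similar_adjoint_transfer hsim α hadj⟩
      · rintro ⟨α, h1, h2⟩
        have hae := adjoint_isAntiEndo β hreg.1 α h1
        have s1 := balpha_similar β hreg α h1 hae.1 hae.2.2 xs pf hgen1
        have s2 := balpha_similar β' hreg' α h2 hae.1 hae.2.2 xs pf hgen1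
        exact similar_trans (similar_symm s1) s2
  · -- part 2: the generator case
    intro hgen
    obtain ⟨n, xs, pf, hgen1⟩ := hgen.exists_data
    refine ⟨?_, ?_, ?_⟩
    · intro α hα
      exact ⟨balpha_rightReg_of_data α hα xs pf hgen1,
        balpha_leftReg_of_data α hα xs pf hgen1, balpha_isAdjoint α⟩
    · intro K iK DK β hr hl α hadj
      have hae := adjoint_isAntiEndo β hr.1 α hadj
      have hbij := adjoint_bijective β hr hl α hadj
      exact ⟨⟨hae, hbij⟩, balpha_similar β hr α hadj hae.1 hae.2.2 xs pf hgen1⟩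
    · intro K iK DK β K' iK' DK' β' hr hl hr' hl'
      constructor
      · intro hsim
        obtain ⟨α, hadj⟩ := exists_adjoint β hr
        exact ⟨α, hadj, similar_adjoint_transfer hsim α hadj⟩
      · rintro ⟨α, h1, h2⟩
        have hae := adjoint_isAntiEndo β hr.1 α h1
        have s1 := balpha_similar β hr α h1 hae.1 hae.2.2 xs pf hgen1
        have s2 := balpha_similar β' hr' α h2 hae.1 hae.2.2 xs pf hgen1
        exact similar_trans (similar_symm s1) s2
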